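/- Let A, B be positive semidefinite matrices in Mₙ(ℂ) forming a monotone pair, i.e., A = f(C), B = g(C) for some positive semidefinite C and nondecreasing nonnegative functions f, g on [0,∞). Then for every self-adjoint projection E ∈ Mₙ(ℂ) there exists a unitary V with |AEB| ≤ V |ABE| V*. -/

import Mathlib

open scoped Matrix ComplexOrder

/-- `A^p` for a matrix, via continuous functional calculus with the real power function. -/
noncomputable def mpow {n : ℕ} (A : Matrix (Fin n) (Fin n) ℂ) (p : ℝ) : Matrix (Fin n) (Fin n) ℂ :=
  cfc (fun x : ℝ => x ^ p) A

/-- Matrix absolute value `|X| = (XᴴX)^{1/2}`. -/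
noncomputable def matAbs {n : ℕ} (X : Matrix (Fin n) (Fin n) ℂ) : Matrix (Fin n) (Fin n) ℂ :=
  cfc Real.sqrt (Xᴴ * X)

/-- Loewner order: `X ≤ Y` iff `Y - X` is positive semidefinite. -/
def loewnerLE {n : ℕ} (X Y : Matrix (Fin n) (Fin n) ℂ) : Prop := (Y - X).PosSemidef

/-- `(A, B)` is a monotone pair: `A = f(C)`, `B = g(C)` for some positive semidefinite `C` and
nonnegative nondecreasing functions `f`, `g` on `[0, ∞)`. -/
def MonotonePair {n : ℕ} (A B : Matrix (Fin n) (Fin n) ℂ) : Prop :=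
  ∃ (C : Matrix (Fin n) (Fin n) ℂ) (f g : ℝ → ℝ), C.PosSemidef ∧
    MonotoneOn f (Set.Ici 0) ∧ MonotoneOn g (Set.Ici 0) ∧
    (∀ x ∈ Set.Ici (0 : ℝ), 0 ≤ f x) ∧ (∀ x ∈ Set.Ici (0 : ℝ), 0 ≤ g x) ∧
    A = cfc f C ∧ B = cfc g C

section Aux

open Matrix Finset Module

/-! ### Weighted Chebyshev sum inequality -/

private lemma cheb_sum {n : ℕ} (p x y : Fin n → ℝ) (hp : ∀ i, 0 ≤ p i)
    (hxy : ∀ i j, 0 ≤ (x i - x j) * (y i - y j)) :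
    (∑ i, p i * x i) * (∑ i, p i * y i) ≤ (∑ i, p i) * (∑ i, p i * (x i * y i)) := by
  have key : (0:ℝ) ≤ ∑ i, ∑ j, p i * p j * ((x i - x j) * (y i - y j)) :=
    Finset.sum_nonneg fun i _ => Finset.sum_nonneg fun j _ =>
      mul_nonneg (mul_nonneg (hp i) (hp j)) (hxy i j)
  have expand : ∑ i, ∑ j, p i * p j * ((x i - x j) * (y i - y j))
      = ((∑ i, p i * (x i * y i)) * (∑ i, p i) + (∑ i, p i) * (∑ i, p i * (x i * y i)))
        - ((∑ i, p i * x i) * (∑ i, p i * y i) + (∑ i, p i * y i) * (∑ i, p i * x i)) := by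
    rw [Finset.sum_mul_sum, Finset.sum_mul_sum, Finset.sum_mul_sum, Finset.sum_mul_sum,
      ← Finset.sum_add_distrib, ← Finset.sum_add_distrib, ← Finset.sum_sub_distrib]
    refine Finset.sum_congr rfl fun i _ => ?_
    rw [← Finset.sum_add_distrib, ← Finset.sum_add_distrib, ← Finset.sum_sub_distrib]
    exact Finset.sum_congr rfl fun j _ => by ring
  rw [expand] at key
  nlinarith [key]

private lemma cheb_sum' {n : ℕ} (p x y : Fin n → ℝ) (hp : ∀ i, 0 ≤ p i)
    (hxy : ∀ i j, 0 ≤ (x i - x j) * (y i - y j)) :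
    (∑ i, x i * p i) * (∑ i, y i * p i) ≤ (∑ i, (x i * y i) * p i) * (∑ i, p i) := by
  have e1 : ∑ i, x i * p i = ∑ i, p i * x i := Finset.sum_congr rfl fun i _ => mul_comm _ _
  have e2 : ∑ i, y i * p i = ∑ i, p i * y i := Finset.sum_congr rfl fun i _ => mul_comm _ _
  have e3 : ∑ i, (x i * y i) * p i = ∑ i, p i * (x i * y i) :=
    Finset.sum_congr rfl fun i _ => mul_comm _ _
  rw [e1, e2, e3, mul_comm (∑ i, p i * (x i * y i)) (∑ i, p i)]
  exact cheb_sum p x y hp hxy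

/-! ### Sorted eigenvalues and eigenbasis -/

private noncomputable def sEig {n : ℕ} {M : Matrix (Fin n) (Fin n) ℂ} (hM : M.IsHermitian) :
    Fin n → ℝ := hM.eigenvalues ∘ Tuple.sort hM.eigenvalues

private lemma sEig_monotone {n : ℕ} {M : Matrix (Fin n) (Fin n) ℂ} (hM : M.IsHermitian) :
    Monotone (sEig hM) := Tuple.monotone_sort _

private noncomputable def sBasis {n : ℕ} {M : Matrix (Fin n) (Fin n) ℂ} (hM : M.IsHermitian) :
    Fin n → EuclideanSpace ℂ (Fin n) := fun i => hM.eigenvectorBasis (Tuple.sort hM.eigenvalues i)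

private lemma sBasis_orthonormal {n : ℕ} {M : Matrix (Fin n) (Fin n) ℂ} (hM : M.IsHermitian) :
    Orthonormal ℂ (sBasis hM) :=
  hM.eigenvectorBasis.orthonormal.comp _ (Equiv.injective _)

private lemma sBasis_eig {n : ℕ} {M : Matrix (Fin n) (Fin n) ℂ} (hM : M.IsHermitian) (i : Fin n) :
    Matrix.toEuclideanLin M (sBasis hM i) = ((sEig hM i : ℝ) : ℂ) • sBasis hM i := by
  have h := hM.mulVec_eigenvectorBasis (Tuple.sort hM.eigenvalues i)
  rw [Matrix.toEuclideanLin_apply]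
  ext j
  have := congrFun h j
  simp only [Pi.smul_apply] at this
  simpa [sBasis, sEig, Complex.real_smul] using this

private lemma qf_span {n : ℕ} {M : Matrix (Fin n) (Fin n) ℂ}
    (e : Fin n → EuclideanSpace ℂ (Fin n)) (he : Orthonormal ℂ e)
    (μ : Fin n → ℝ) (heig : ∀ i, Matrix.toEuclideanLin M (e i) = ((μ i : ℝ) : ℂ) • e i)
    (s : Finset (Fin n)) (l : Fin n → ℂ) :
    RCLike.re (inner ℂ (∑ i ∈ s, l i • e i) (Matrix.toEuclideanLin M (∑ i ∈ s, l i • e i)) : ℂ)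
      = ∑ i ∈ s, μ i * ‖l i‖ ^ 2
    ∧ ‖∑ i ∈ s, l i • e i‖ ^ 2 = ∑ i ∈ s, ‖l i‖ ^ 2 := by
  have hTv : Matrix.toEuclideanLin M (∑ i ∈ s, l i • e i) = ∑ i ∈ s, (l i * (μ i : ℂ)) • e i := by
    rw [map_sum]
    refine Finset.sum_congr rfl fun i _ => ?_
    rw [LinearMap.map_smul, heig i, smul_smul]
  constructor
  · rw [hTv, he.inner_sum, map_sum]
    refine Finset.sum_congr rfl fun i _ => ?_
    have h4 : (starRingEnd ℂ) (l i) * (l i * (μ i : ℂ))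
        = (RCLike.ofReal (μ i * ‖l i‖ ^ 2) : ℂ) := by
      rw [← mul_assoc, RCLike.conj_mul]
      push_cast
      rw [mul_comm]
      with_unfolding_all rfl
    rw [h4, RCLike.ofReal_re]
  · have h2 := he.inner_sum l l s
    have h3 : (‖∑ i ∈ s, l i • e i‖ : ℝ) ^ 2
        = RCLike.re (inner ℂ (∑ i ∈ s, l i • e i) (∑ i ∈ s, l i • e i) : ℂ) :=
      norm_sq_eq_re_inner _
    rw [h3, h2, map_sum]
    refine Finset.sum_congr rfl fun i _ => ?_
    rw [RCLike.conj_mul]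
    norm_cast

/-! ### Courant–Fischer style eigenvalue domination -/

private lemma span_repr {n : ℕ} (e : Fin n → EuclideanSpace ℂ (Fin n)) (s : Finset (Fin n))
    (v : EuclideanSpace ℂ (Fin n))
    (hv : v ∈ Submodule.span ℂ (Set.range fun i : {i : Fin n // i ∈ s} => e i)) :
    ∃ lc : Fin n → ℂ, v = ∑ i ∈ s, lc i • e i := by
  classical
  obtain ⟨c, hc⟩ := (Submodule.mem_span_range_iff_exists_fun ℂ).mp hv
  refine ⟨fun i => if h : i ∈ s then c ⟨i, h⟩ else 0, ?_⟩
  rw [← hc, Finset.sum_subtype s (fun i => Iff.rfl)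
    (fun i => (if h : i ∈ s then c ⟨i, h⟩ else 0) • e i)]
  exact Finset.sum_congr rfl fun i _ => by rw [dif_pos i.2]

private lemma eigdom {n : ℕ} {P Q : Matrix (Fin n) (Fin n) ℂ}
    (hP : P.PosSemidef) (hQ : Q.PosSemidef)
    (φ : EuclideanSpace ℂ (Fin n) →ₗ[ℂ] EuclideanSpace ℂ (Fin n))
    (key : ∀ (v : EuclideanSpace ℂ (Fin n)) (l : ℝ), 0 < l →
      l * ‖v‖ ^ 2 ≤ RCLike.re (inner ℂ v (Matrix.toEuclideanLin P v) : ℂ) →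
      l * ‖φ v‖ ^ 2 ≤ RCLike.re (inner ℂ (φ v) (Matrix.toEuclideanLin Q (φ v)) : ℂ)
        ∧ (v ≠ 0 → φ v ≠ 0))
    (k : Fin n) : sEig hP.1 k ≤ sEig hQ.1 k := by
  classical
  by_cases hl0 : sEig hP.1 k ≤ 0
  · exact le_trans hl0 (hQ.eigenvalues_nonneg _)
  push_neg at hl0
  set l : ℝ := sEig hP.1 k with hldef
  by_contra hcon
  push_neg at hcon
  set eP : Fin n → EuclideanSpace ℂ (Fin n) := sBasis hP.1 with hePdef
  set eQ : Fin n → EuclideanSpace ℂ (Fin n) := sBasis hQ.1 with heQdef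
  set V : Submodule ℂ (EuclideanSpace ℂ (Fin n)) :=
    Submodule.span ℂ (Set.range fun i : {i : Fin n // i ∈ Finset.Ici k} => eP i) with hVdef
  set U : Submodule ℂ (EuclideanSpace ℂ (Fin n)) :=
    Submodule.span ℂ (Set.range fun i : {i : Fin n // i ∈ Finset.Iic k} => eQ i) with hUdef
  have claim1 : ∀ v ∈ V, l * ‖v‖ ^ 2 ≤ RCLike.re (inner ℂ v (Matrix.toEuclideanLin P v) : ℂ) := by
    intro v hv
    obtain ⟨lc, rfl⟩ := span_repr eP (Finset.Ici k) v hv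
    obtain ⟨hq, hn⟩ := qf_span eP (sBasis_orthonormal hP.1) (sEig hP.1) (sBasis_eig hP.1)
      (Finset.Ici k) lc
    rw [hq, hn, Finset.mul_sum]
    refine Finset.sum_le_sum fun i hi => ?_
    exact mul_le_mul_of_nonneg_right (sEig_monotone hP.1 (Finset.mem_Ici.mp hi)) (by positivity)
  have claim5 : ∀ u ∈ U,
      RCLike.re (inner ℂ u (Matrix.toEuclideanLin Q u) : ℂ) ≤ sEig hQ.1 k * ‖u‖ ^ 2 := by
    intro u hu
    obtain ⟨lc, rfl⟩ := span_repr eQ (Finset.Iic k) u hu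
    obtain ⟨hq, hn⟩ := qf_span eQ (sBasis_orthonormal hQ.1) (sEig hQ.1) (sBasis_eig hQ.1)
      (Finset.Iic k) lc
    rw [hq, hn, Finset.mul_sum]
    refine Finset.sum_le_sum fun i hi => ?_
    exact mul_le_mul_of_nonneg_right (sEig_monotone hQ.1 (Finset.mem_Iic.mp hi)) (by positivity)
  have dimV : finrank ℂ V = n - k := by
    have hon : Orthonormal ℂ (fun i : {i : Fin n // i ∈ Finset.Ici k} => eP i.1) :=
      (sBasis_orthonormal hP.1).comp Subtype.val Subtype.val_injective
    rw [hVdef, finrank_span_eq_card hon.linearIndependent]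
    rw [Fintype.card_coe, Fin.card_Ici]
  have dimU : finrank ℂ U = k + 1 := by
    have hon : Orthonormal ℂ (fun i : {i : Fin n // i ∈ Finset.Iic k} => eQ i.1) :=
      (sBasis_orthonormal hQ.1).comp Subtype.val Subtype.val_injective
    rw [hUdef, finrank_span_eq_card hon.linearIndependent]
    rw [Fintype.card_coe, Fin.card_Iic]
  set W : Submodule ℂ (EuclideanSpace ℂ (Fin n)) := V.map φ with hWdef
  have dimW : finrank ℂ W = n - k := by
    have hker : LinearMap.ker (φ.domRestrict V) = ⊥ := by
      rw [LinearMap.ker_eq_bot']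
      intro m hm
      by_contra hm0
      have h1 := claim1 m.1 m.2
      have h2 := (key m.1 l hl0 h1).2 (fun h => hm0 (by ext; simp [h]))
      exact h2 hm
    have := LinearMap.finrank_range_add_finrank_ker (φ.domRestrict V)
    rw [hker, finrank_bot, add_zero, LinearMap.range_domRestrict] at this
    rw [hWdef, this, dimV]
  have claim4 : ∀ w ∈ W, l * ‖w‖ ^ 2 ≤ RCLike.re (inner ℂ w (Matrix.toEuclideanLin Q w) : ℂ) := by
    intro w hw
    obtain ⟨v, hvV, rfl⟩ := Submodule.mem_map.mp hw
    exact (key v l hl0 (claim1 v hvV)).1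
  have hsum := Submodule.finrank_sup_add_finrank_inf_eq U W
  rw [dimU, dimW] at hsum
  have hle : finrank ℂ (U ⊔ W : Submodule ℂ (EuclideanSpace ℂ (Fin n))) ≤ n := by
    have := Submodule.finrank_le (U ⊔ W : Submodule ℂ (EuclideanSpace ℂ (Fin n)))
    rwa [finrank_euclideanSpace_fin] at this
  have hpos : 0 < finrank ℂ (U ⊓ W : Submodule ℂ (EuclideanSpace ℂ (Fin n))) := by
    have hkn : (k : ℕ) < n := k.2
    omega
  have hne : (U ⊓ W : Submodule ℂ (EuclideanSpace ℂ (Fin n))) ≠ ⊥ := by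
    intro h
    rw [h, finrank_bot] at hpos
    exact lt_irrefl 0 hpos
  obtain ⟨x, hx, hx0⟩ := (Submodule.ne_bot_iff _).mp hne
  have hxpos : (0:ℝ) < ‖x‖ ^ 2 := pow_pos (norm_pos_iff.mpr hx0) 2
  have c4 := claim4 x (Submodule.mem_inf.mp hx).2
  have c5 := claim5 x (Submodule.mem_inf.mp hx).1
  nlinarith [c4, c5, hcon, hxpos]

/-! ### Euclidean norm computations for matrices -/

private lemma tl_mul {n : ℕ} (A B : Matrix (Fin n) (Fin n) ℂ) (x : EuclideanSpace ℂ (Fin n)) :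
    Matrix.toEuclideanLin (A * B) x = Matrix.toEuclideanLin A (Matrix.toEuclideanLin B x) := by
  simp only [Matrix.toEuclideanLin_apply, Equiv.apply_symm_apply, Matrix.mulVec_mulVec]

private lemma tl_unitary_norm {n : ℕ} {U₀ : Matrix (Fin n) (Fin n) ℂ}
    (hU : star U₀ * U₀ = 1) (x : EuclideanSpace ℂ (Fin n)) :
    ‖Matrix.toEuclideanLin U₀ x‖ = ‖x‖ := by
  have h2 : ‖Matrix.toEuclideanLin U₀ x‖ ^ 2 = ‖x‖ ^ 2 := by
    rw [norm_sq_eq_re_inner (𝕜 := ℂ), norm_sq_eq_re_inner (𝕜 := ℂ),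
      EuclideanSpace.inner_eq_star_dotProduct, EuclideanSpace.inner_eq_star_dotProduct]
    congr 1
    rw [piLp_ofLp_toEuclideanLin, Matrix.toLin'_apply, Matrix.star_mulVec,
      dotProduct_comm, Matrix.dotProduct_mulVec, Matrix.vecMul_vecMul, ← Matrix.star_eq_conjTranspose, hU,
      Matrix.vecMul_one, dotProduct_comm]
  rw [← Real.sqrt_sq (norm_nonneg (Matrix.toEuclideanLin U₀ x)), h2,
    Real.sqrt_sq (norm_nonneg x)]

private lemma tl_diag_norm {n : ℕ} (d : Fin n → ℝ) (x : EuclideanSpace ℂ (Fin n)) :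
    ‖Matrix.toEuclideanLin (Matrix.diagonal (fun i => (d i : ℂ))) x‖ ^ 2
      = ∑ i, d i ^ 2 * ‖x i‖ ^ 2 := by
  rw [EuclideanSpace.norm_eq, Real.sq_sqrt (by positivity)]
  refine Finset.sum_congr rfl fun i _ => ?_
  have : (Matrix.toEuclideanLin (Matrix.diagonal (fun i => (d i : ℂ))) x) i
      = (d i : ℂ) * x i := by
    rw [Matrix.toEuclideanLin_apply]
    have h := Matrix.mulVec_diagonal (fun i => (d i : ℂ)) ((WithLp.equiv 2 (Fin n → ℂ)) x) i
    exact h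
  rw [this, norm_mul, mul_pow, Complex.norm_real, Real.norm_eq_abs, sq_abs]

private lemma norm_sq_eq_sum' {n : ℕ} (x : EuclideanSpace ℂ (Fin n)) :
    ‖x‖ ^ 2 = ∑ i, ‖x i‖ ^ 2 := by
  rw [EuclideanSpace.norm_eq, Real.sq_sqrt (by positivity)]

/-! ### Chebyshev inequality for a monotone pair -/

set_option maxHeartbeats 1000000 in
private lemma cheb_matrix {n : ℕ} {C : Matrix (Fin n) (Fin n) ℂ} (hC : C.PosSemidef)
    (f g : ℝ → ℝ) (hf : MonotoneOn f (Set.Ici 0)) (hg : MonotoneOn g (Set.Ici 0))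
    (hf0 : ∀ x ∈ Set.Ici (0:ℝ), 0 ≤ f x) (hg0 : ∀ x ∈ Set.Ici (0:ℝ), 0 ≤ g x)
    (u : EuclideanSpace ℂ (Fin n)) :
    ‖Matrix.toEuclideanLin (cfc f C) u‖ * ‖Matrix.toEuclideanLin (cfc g C) u‖
      ≤ ‖Matrix.toEuclideanLin (cfc f C * cfc g C) u‖ * ‖u‖ := by
  classical
  set U₀ : Matrix (Fin n) (Fin n) ℂ :=
    (Matrix.IsHermitian.eigenvectorUnitary hC.1 : Matrix (Fin n) (Fin n) ℂ) with hU₀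
  have hsU : star U₀ * U₀ = 1 := Matrix.UnitaryGroup.star_mul_self _
  have hUs : U₀ * star U₀ = 1 :=
    Matrix.mem_unitaryGroup_iff.mp (Matrix.IsHermitian.eigenvectorUnitary hC.1).2
  set μ : Fin n → ℝ := hC.1.eigenvalues with hμdef
  have hcf : ∀ h : ℝ → ℝ, cfc h C
      = U₀ * Matrix.diagonal (fun i => ((h (μ i) : ℝ) : ℂ)) * star U₀ := by
    intro h
    rw [hC.1.cfc_eq h, Matrix.IsHermitian.cfc]
    rfl
  have hprod : cfc f C * cfc g C
      = U₀ * Matrix.diagonal (fun i => ((f (μ i) * g (μ i) : ℝ) : ℂ)) * star U₀ := by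
    rw [hcf f, hcf g]
    have e1 : U₀ * Matrix.diagonal (fun i => ((f (μ i) : ℝ) : ℂ)) * star U₀
        * (U₀ * Matrix.diagonal (fun i => ((g (μ i) : ℝ) : ℂ)) * star U₀)
        = U₀ * (Matrix.diagonal (fun i => ((f (μ i) : ℝ) : ℂ)) * (star U₀ * U₀)
            * Matrix.diagonal (fun i => ((g (μ i) : ℝ) : ℂ))) * star U₀ := by
      simp only [Matrix.mul_assoc]
    rw [e1, hsU, mul_one, Matrix.diagonal_mul_diagonal]
    congr 2
    funext i
    push_cast
    ring
  set w : EuclideanSpace ℂ (Fin n) := Matrix.toEuclideanLin (star U₀) u with hwdef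
  have hwnorm : ‖w‖ = ‖u‖ := by
    refine tl_unitary_norm ?_ u
    rw [star_star, hUs]
  have hdiag : ∀ h : ℝ → ℝ,
      ‖Matrix.toEuclideanLin
          (U₀ * Matrix.diagonal (fun i => ((h (μ i) : ℝ) : ℂ)) * star U₀) u‖ ^ 2
        = ∑ i, (h (μ i)) ^ 2 * ‖w i‖ ^ 2 := by
    intro h
    rw [tl_mul, tl_mul, tl_unitary_norm hsU, ← hwdef, tl_diag_norm]
  have hμ0 : ∀ i, (0:ℝ) ≤ μ i := fun i => hC.eigenvalues_nonneg i
  have hineq : (∑ i, (f (μ i))^2 * ‖w i‖^2) * (∑ i, (g (μ i))^2 * ‖w i‖^2)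
      ≤ (∑ i, (f (μ i) * g (μ i))^2 * ‖w i‖^2) * (∑ i, ‖w i‖^2) := by
    have h := cheb_sum' (fun i => ‖w i‖^2) (fun i => (f (μ i))^2) (fun i => (g (μ i))^2)
      (fun i => by positivity) ?_
    · calc (∑ i, (f (μ i))^2 * ‖w i‖^2) * (∑ i, (g (μ i))^2 * ‖w i‖^2)
          ≤ (∑ i, ((f (μ i))^2 * (g (μ i))^2) * ‖w i‖^2) * (∑ i, ‖w i‖^2) := h
        _ = (∑ i, (f (μ i) * g (μ i))^2 * ‖w i‖^2) * (∑ i, ‖w i‖^2) := by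
            congr 1
            exact Finset.sum_congr rfl fun i _ => by ring
    · intro i j
      show 0 ≤ (f (μ i) ^ 2 - f (μ j) ^ 2) * (g (μ i) ^ 2 - g (μ j) ^ 2)
      rcases le_total (μ i) (μ j) with hij | hij
      · have h1 : f (μ i) ≤ f (μ j) := hf (hμ0 i) (hμ0 j) hij
        have h2 : g (μ i) ≤ g (μ j) := hg (hμ0 i) (hμ0 j) hij
        have h3 : 0 ≤ f (μ i) := hf0 _ (hμ0 i)
        have h4 : 0 ≤ g (μ i) := hg0 _ (hμ0 i)
        have hx : f (μ i) ^ 2 ≤ f (μ j) ^ 2 := by nlinarith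
        have hy : g (μ i) ^ 2 ≤ g (μ j) ^ 2 := by nlinarith
        nlinarith [mul_nonneg (sub_nonneg.2 hx) (sub_nonneg.2 hy)]
      · have h1 : f (μ j) ≤ f (μ i) := hf (hμ0 j) (hμ0 i) hij
        have h2 : g (μ j) ≤ g (μ i) := hg (hμ0 j) (hμ0 i) hij
        have h3 : 0 ≤ f (μ j) := hf0 _ (hμ0 j)
        have h4 : 0 ≤ g (μ j) := hg0 _ (hμ0 j)
        have hx : f (μ j) ^ 2 ≤ f (μ i) ^ 2 := by nlinarith
        have hy : g (μ j) ^ 2 ≤ g (μ i) ^ 2 := by nlinarith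
        nlinarith [mul_nonneg (sub_nonneg.2 hx) (sub_nonneg.2 hy)]
  have hsq : (‖Matrix.toEuclideanLin (cfc f C) u‖ * ‖Matrix.toEuclideanLin (cfc g C) u‖) ^ 2
      ≤ (‖Matrix.toEuclideanLin (cfc f C * cfc g C) u‖ * ‖u‖) ^ 2 := by
    rw [mul_pow, mul_pow, hprod, hcf f, hcf g, hdiag f, hdiag g, hdiag (fun x => f x * g x),
      ← hwnorm, norm_sq_eq_sum' w]
    exact hineq
  calc ‖Matrix.toEuclideanLin (cfc f C) u‖ * ‖Matrix.toEuclideanLin (cfc g C) u‖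
      = Real.sqrt ((‖Matrix.toEuclideanLin (cfc f C) u‖
          * ‖Matrix.toEuclideanLin (cfc g C) u‖) ^ 2) := by
        rw [Real.sqrt_sq (by positivity)]
    _ ≤ Real.sqrt ((‖Matrix.toEuclideanLin (cfc f C * cfc g C) u‖ * ‖u‖) ^ 2) :=
        Real.sqrt_le_sqrt hsq
    _ = ‖Matrix.toEuclideanLin (cfc f C * cfc g C) u‖ * ‖u‖ := by
        rw [Real.sqrt_sq (by positivity)]

/-! ### Sorted diagonalization and the construction of the unitary -/

private noncomputable def sUnitary {n : ℕ} {M : Matrix (Fin n) (Fin n) ℂ} (hM : M.IsHermitian) :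
    Matrix (Fin n) (Fin n) ℂ :=
  (Matrix.IsHermitian.eigenvectorUnitary hM : Matrix (Fin n) (Fin n) ℂ).submatrix
    id ⇑(Tuple.sort hM.eigenvalues)

private lemma sUnitary_mem {n : ℕ} {M : Matrix (Fin n) (Fin n) ℂ} (hM : M.IsHermitian) :
    sUnitary hM ∈ Matrix.unitaryGroup (Fin n) ℂ := by
  classical
  set U : Matrix (Fin n) (Fin n) ℂ :=
    (Matrix.IsHermitian.eigenvectorUnitary hM : Matrix (Fin n) (Fin n) ℂ) with hU
  set σ := Tuple.sort hM.eigenvalues with hσ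
  have hsU : star U * U = 1 := Matrix.UnitaryGroup.star_mul_self _
  rw [Matrix.mem_unitaryGroup_iff']
  ext i j
  rw [Matrix.mul_apply]
  calc (∑ k, star (sUnitary hM) i k * sUnitary hM k j)
      = ∑ k, star (U k (σ i)) * U k (σ j) := by
        refine Finset.sum_congr rfl fun k _ => ?_
        simp only [sUnitary, hσ, hU, Matrix.star_apply, Matrix.submatrix_apply, id_eq]
    _ = (star U * U) (σ i) (σ j) := by
        rw [Matrix.mul_apply]
        exact Finset.sum_congr rfl fun k _ => by rw [Matrix.star_apply]
    _ = (1 : Matrix (Fin n) (Fin n) ℂ) i j := by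
        rw [hsU, Matrix.one_apply, Matrix.one_apply]
        simp [σ.injective.eq_iff]

private lemma submatrix_conj_diag {n : ℕ} (U : Matrix (Fin n) (Fin n) ℂ)
    (σ : Equiv.Perm (Fin n)) (d : Fin n → ℂ) :
    (U.submatrix id ⇑σ) * Matrix.diagonal (fun i => d (σ i)) * star (U.submatrix id ⇑σ)
      = U * Matrix.diagonal d * star U := by
  classical
  have entry : ∀ (W : Matrix (Fin n) (Fin n) ℂ) (e : Fin n → ℂ) i j,
      (W * Matrix.diagonal e * star W) i j = ∑ k, W i k * e k * star (W j k) := by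
    intro W e i j
    rw [Matrix.mul_apply]
    refine Finset.sum_congr rfl fun k _ => ?_
    rw [Matrix.mul_diagonal, Matrix.star_apply]
  ext i j
  rw [entry, entry]
  calc (∑ k, (U.submatrix id ⇑σ) i k * d (σ k) * star ((U.submatrix id ⇑σ) j k))
      = ∑ k, U i (σ k) * d (σ k) * star (U j (σ k)) := by
        refine Finset.sum_congr rfl fun k _ => ?_
        rw [Matrix.submatrix_apply, Matrix.submatrix_apply]
        rfl
    _ = ∑ m, U i m * d m * star (U j m) :=
        Equiv.sum_comp σ (fun m => U i m * d m * star (U j m))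

private lemma sorted_cfc {n : ℕ} {M : Matrix (Fin n) (Fin n) ℂ} (hM : M.IsHermitian)
    (h : ℝ → ℝ) :
    cfc h M = sUnitary hM * Matrix.diagonal (fun i => ((h (sEig hM i) : ℝ) : ℂ))
      * star (sUnitary hM) := by
  rw [hM.cfc_eq h, Matrix.IsHermitian.cfc, sUnitary]
  exact (submatrix_conj_diag _ (Tuple.sort hM.eigenvalues)
    (RCLike.ofReal ∘ h ∘ hM.eigenvalues)).symm

private lemma construct {n : ℕ} (X Y : Matrix (Fin n) (Fin n) ℂ)
    (hdom : ∀ k : Fin n, sEig (Matrix.posSemidef_conjTranspose_mul_self X).1 k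
        ≤ sEig (Matrix.posSemidef_conjTranspose_mul_self Y).1 k) :
    ∃ V : Matrix (Fin n) (Fin n) ℂ, V ∈ Matrix.unitaryGroup (Fin n) ℂ ∧
      loewnerLE (matAbs X) (V * matAbs Y * Vᴴ) := by
  classical
  have hX := (Matrix.posSemidef_conjTranspose_mul_self X).1
  have hY := (Matrix.posSemidef_conjTranspose_mul_self Y).1
  set Ux := sUnitary hX with hUxdef
  set Uy := sUnitary hY with hUydef
  have hUx1 : Ux * star Ux = 1 := Matrix.mem_unitaryGroup_iff.mp (sUnitary_mem hX)
  have hUy1 : star Uy * Uy = 1 := Matrix.mem_unitaryGroup_iff'.mp (sUnitary_mem hY)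
  have hXabs : matAbs X
      = Ux * Matrix.diagonal (fun i => ((Real.sqrt (sEig hX i) : ℝ) : ℂ)) * star Ux :=
    sorted_cfc hX Real.sqrt
  have hYabs : matAbs Y
      = Uy * Matrix.diagonal (fun i => ((Real.sqrt (sEig hY i) : ℝ) : ℂ)) * star Uy :=
    sorted_cfc hY Real.sqrt
  have hcancel : ∀ Z : Matrix (Fin n) (Fin n) ℂ, star Uy * (Uy * Z) = Z := fun Z => by
    rw [← Matrix.mul_assoc, hUy1, one_mul]
  refine ⟨Ux * star Uy, ?_, ?_⟩
  · rw [Matrix.mem_unitaryGroup_iff, Matrix.star_mul, star_star]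
    calc Ux * star Uy * (Uy * star Ux) = Ux * (star Uy * (Uy * star Ux)) := by
          simp only [Matrix.mul_assoc]
      _ = Ux * star Ux := by rw [hcancel]
      _ = 1 := hUx1
  · show (Ux * star Uy * matAbs Y * (Ux * star Uy)ᴴ - matAbs X).PosSemidef
    have hVY : Ux * star Uy * matAbs Y * (Ux * star Uy)ᴴ
        = Ux * Matrix.diagonal (fun i => ((Real.sqrt (sEig hY i) : ℝ) : ℂ)) * star Ux := by
      rw [hYabs, show (Ux * star Uy)ᴴ = star (Ux * star Uy) from rfl,
        Matrix.star_mul, star_star]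
      simp only [Matrix.mul_assoc]
      rw [hcancel, hcancel]
    rw [hVY, hXabs]
    have hdiff : Ux * Matrix.diagonal (fun i => ((Real.sqrt (sEig hY i) : ℝ) : ℂ)) * star Ux
        - Ux * Matrix.diagonal (fun i => ((Real.sqrt (sEig hX i) : ℝ) : ℂ)) * star Ux
        = Ux * Matrix.diagonal
            (fun i => ((Real.sqrt (sEig hY i) - Real.sqrt (sEig hX i) : ℝ) : ℂ)) * star Ux := by
      have : Matrix.diagonal (fun i => ((Real.sqrt (sEig hY i) - Real.sqrt (sEig hX i) : ℝ) : ℂ))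
          = Matrix.diagonal (fun i => ((Real.sqrt (sEig hY i) : ℝ) : ℂ))
            - Matrix.diagonal (fun i => ((Real.sqrt (sEig hX i) : ℝ) : ℂ)) := by
        rw [Matrix.diagonal_sub]
        congr 1
        funext i
        push_cast
        ring
      rw [this, Matrix.mul_sub, Matrix.sub_mul]
    rw [hdiff]
    have hpsd : (Matrix.diagonal
        (fun i => ((Real.sqrt (sEig hY i) - Real.sqrt (sEig hX i) : ℝ) : ℂ))).PosSemidef := by
      rw [Matrix.posSemidef_diagonal_iff]
      intro i
      have h1 : Real.sqrt (sEig hX i) ≤ Real.sqrt (sEig hY i) := Real.sqrt_le_sqrt (hdom i)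
      rw [Complex.zero_le_real]
      linarith
    exact hpsd.mul_mul_conjTranspose_same Ux

end Aux

set_option maxHeartbeats 2000000 in
open Matrix in
/-- For a monotone pair `(A, B)` of positive semidefinite matrices and a self-adjoint
projection `E`, there is a unitary `V` with `|AEB| ≤ V |ABE| V*`. -/
theorem monotone_pair_projection {n : ℕ} (A B E : Matrix (Fin n) (Fin n) ℂ)
    (hA : A.PosSemidef) (hB : B.PosSemidef) (hAB : MonotonePair A B)
    (hE : Eᴴ = E) (hE2 : E * E = E) :
    ∃ V : Matrix (Fin n) (Fin n) ℂ, V ∈ Matrix.unitaryGroup (Fin n) ℂ ∧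
      loewnerLE (matAbs (A * E * B)) (V * matAbs (A * B * E) * Vᴴ) := by
  classical
  obtain ⟨C, f, g, hC, hf, hg, hf0, hg0, hAf, hBg⟩ := hAB
  refine construct (A * E * B) (A * B * E) (fun k => ?_)
  refine eigdom (Matrix.posSemidef_conjTranspose_mul_self _)
    (Matrix.posSemidef_conjTranspose_mul_self _) (Matrix.toEuclideanLin (E * B)) ?_ k
  intro v l hl hPv
  have hBH : Bᴴ = B := hB.1
  have hqf : ∀ (R : Matrix (Fin n) (Fin n) ℂ) (x : EuclideanSpace ℂ (Fin n)),
      RCLike.re (inner ℂ x (Matrix.toEuclideanLin (Rᴴ * R) x) : ℂ)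
        = ‖Matrix.toEuclideanLin R x‖ ^ 2 := by
    intro R x
    rw [tl_mul, Matrix.toEuclideanLin_conjTranspose_eq_adjoint, LinearMap.adjoint_inner_right]
    exact (norm_sq_eq_re_inner _).symm
  set u : EuclideanSpace ℂ (Fin n) := Matrix.toEuclideanLin (E * B) v with hu
  rw [hqf] at hPv
  have hXu : Matrix.toEuclideanLin (A * E * B) v = Matrix.toEuclideanLin A u := by
    rw [hu, ← tl_mul, Matrix.mul_assoc]
  rw [hXu] at hPv
  have hEu : Matrix.toEuclideanLin E u = u := by
    rw [hu, ← tl_mul, ← Matrix.mul_assoc, hE2]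
  have hv0 : v = 0 → u = 0 := fun h => by rw [hu, h, map_zero]
  rw [hqf]
  have hYu : Matrix.toEuclideanLin (A * B * E) u = Matrix.toEuclideanLin (A * B) u := by
    rw [tl_mul, hEu]
  rw [hYu]
  by_cases hu0 : u = 0
  · constructor
    · rw [hu0, map_zero]
      simp
    · intro hv
      exfalso
      apply hv
      rw [hu0, map_zero] at hPv
      simp only [norm_zero] at hPv
      have h1 : ‖v‖ ^ 2 ≤ 0 := by nlinarith
      have h2 : ‖v‖ = 0 := by nlinarith [sq_nonneg ‖v‖, norm_nonneg v]
      exact norm_eq_zero.mp h2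
  · have hv0' : v ≠ 0 := fun h => hu0 (hv0 h)
    refine ⟨?_, fun _ => hu0⟩
    have hadjE : (inner ℂ u u : ℂ) = inner ℂ v (Matrix.toEuclideanLin B u) := by
      have hu2 : u = Matrix.toEuclideanLin E (Matrix.toEuclideanLin B v) := by
        rw [hu, tl_mul]
      have hselfE : Matrix.toEuclideanLin E = LinearMap.adjoint (Matrix.toEuclideanLin E) := by
        rw [← Matrix.toEuclideanLin_conjTranspose_eq_adjoint, hE]
      have hselfB : Matrix.toEuclideanLin B = LinearMap.adjoint (Matrix.toEuclideanLin B) := by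
        rw [← Matrix.toEuclideanLin_conjTranspose_eq_adjoint, hBH]
      calc (inner ℂ u u : ℂ)
          = inner ℂ (Matrix.toEuclideanLin E (Matrix.toEuclideanLin B v)) u := by rw [← hu2]
        _ = inner ℂ (Matrix.toEuclideanLin B v) (Matrix.toEuclideanLin E u) := by
            conv_lhs => rw [hselfE]
            exact LinearMap.adjoint_inner_left _ _ _
        _ = inner ℂ (Matrix.toEuclideanLin B v) u := by rw [hEu]
        _ = inner ℂ v (Matrix.toEuclideanLin B u) := by
            conv_lhs => rw [hselfB]
            exact LinearMap.adjoint_inner_left _ _ _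
    have hCS : ‖u‖ ^ 2 ≤ ‖v‖ * ‖Matrix.toEuclideanLin B u‖ := by
      have h0 : (‖u‖ ^ 2 : ℝ) = RCLike.re (inner ℂ u u : ℂ) := norm_sq_eq_re_inner u
      rw [h0, hadjE]
      calc RCLike.re (inner ℂ v (Matrix.toEuclideanLin B u) : ℂ)
          ≤ ‖(inner ℂ v (Matrix.toEuclideanLin B u) : ℂ)‖ := RCLike.re_le_norm _
        _ ≤ ‖v‖ * ‖Matrix.toEuclideanLin B u‖ := norm_inner_le_norm _ _
    have hcheb : ‖Matrix.toEuclideanLin A u‖ * ‖Matrix.toEuclideanLin B u‖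
        ≤ ‖Matrix.toEuclideanLin (A * B) u‖ * ‖u‖ := by
      have h := cheb_matrix hC f g hf hg hf0 hg0 u
      rwa [← hAf, ← hBg] at h
    set a := ‖Matrix.toEuclideanLin A u‖ with hadef
    set b := ‖Matrix.toEuclideanLin B u‖ with hbdef
    set c := ‖Matrix.toEuclideanLin (A * B) u‖ with hcdef
    have hnu : 0 < ‖u‖ := norm_pos_iff.mpr hu0
    have hnv : 0 < ‖v‖ := norm_pos_iff.mpr hv0'
    have ha : 0 ≤ a := norm_nonneg _
    have hb : 0 ≤ b := norm_nonneg _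
    have hc : 0 ≤ c := norm_nonneg _
    have k1 : a ^ 2 * b ^ 2 ≤ c ^ 2 * ‖u‖ ^ 2 := by
      nlinarith [hcheb, mul_nonneg ha hb, mul_nonneg hc hnu.le]
    have k2 : l * ‖v‖ ^ 2 * b ^ 2 ≤ a ^ 2 * b ^ 2 :=
      mul_le_mul_of_nonneg_right hPv (by positivity)
    have k3 : ‖u‖ ^ 2 * ‖u‖ ^ 2 ≤ ‖v‖ ^ 2 * b ^ 2 := by
      nlinarith [hCS, sq_nonneg ‖u‖, mul_nonneg hnv.le hb]
    have k4 : l * (‖u‖ ^ 2 * ‖u‖ ^ 2) ≤ l * (‖v‖ ^ 2 * b ^ 2) :=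
      mul_le_mul_of_nonneg_left k3 hl.le
    have k5 : l * ‖u‖ ^ 2 * ‖u‖ ^ 2 ≤ c ^ 2 * ‖u‖ ^ 2 := by nlinarith [k4, k2, k1]
    exact le_of_mul_le_mul_right (by linarith [k5]) (by positivity : (0:ℝ) < ‖u‖ ^ 2)
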